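/- Let K be a field of characteristic p > 0, V a finite-dimensional K-vector space, and g a K-linear automorphism of V with g^p = 1. Let 0 = W_0 \subseteq W_1 \subseteq ... \subseteq W_t = V be a chain of g-invariant subspaces, and for 1 \le i \le t let g_i be the automorphism induced by g on the quotient F_i = W_i/W_{i-1}. For an automorphism h of order dividing p of a finite-dimensional space U, write n_U(h) for the K-dimension of the range of (h - 1)^{p-1} (the number of Jordan blocks of size p of h). Then n_V(g) \ge \sum_{i=1}^{t} n_{F_i}(g_i). -/

import Mathlib

open LinearMap

private lemma aux_sum_chain (t : ℕ) (s : Fin t → ℕ) (a : Fin (t + 1) → ℕ)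
    (h : ∀ i : Fin t, s i + a i.castSucc ≤ a i.succ) :
    a 0 + ∑ i : Fin t, s i ≤ a (Fin.last t) := by
  induction t with
  | zero => simp [Fin.last]
  | succ t ih =>
    have h1 := ih (fun i => s i.castSucc) (fun i => a i.castSucc) (fun i => by
      simpa only [Fin.succ_castSucc] using h i.castSucc)
    have h2 := h (Fin.last t)
    have h3 : (Fin.last t).succ = Fin.last (t + 1) := rfl
    rw [Fin.sum_univ_castSucc, ← add_assoc, ← h3]
    simp only [Fin.castSucc_zero] at h1
    omega

private lemma aux_step {K V : Type*} [Field K] [AddCommGroup V] [Module K V]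
    [FiniteDimensional K V]
    (f : Module.End K V) (U P : Submodule K V) (hPU : P ≤ U)
    (hfU : ∀ v ∈ U, f v ∈ U) (hfP : ∀ v ∈ P, f v ∈ P)
    (h : P.comap U.subtype ≤ (P.comap U.subtype).comap (f.restrict hfU)) :
    Module.finrank K (LinearMap.range (Submodule.mapQ (P.comap U.subtype) (P.comap U.subtype)
        (f.restrict hfU) h)) + Module.finrank K (P.map f)
      ≤ Module.finrank K (U.map f) := by
  have hrange : LinearMap.range (Submodule.mapQ (P.comap U.subtype) (P.comap U.subtype)
      (f.restrict hfU) h)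
      = (LinearMap.range (f.restrict hfU)).map (P.comap U.subtype).mkQ := by
    rw [Submodule.mapQ, Submodule.range_liftQ, LinearMap.range_comp]
  rw [hrange]
  set S : Submodule K U := LinearMap.range (f.restrict hfU) with hS
  set Φ : S →ₗ[K] U ⧸ (P.comap U.subtype) := (P.comap U.subtype).mkQ.domRestrict S with hΦ
  have hrΦ : LinearMap.range Φ = S.map (P.comap U.subtype).mkQ :=
    LinearMap.range_domRestrict S (P.comap U.subtype).mkQ
  have hkΦ : LinearMap.ker Φ = (P.comap U.subtype).comap S.subtype := by
    rw [hΦ, LinearMap.ker_domRestrict, Submodule.ker_mkQ]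
  rw [← hrΦ]
  -- finrank S = finrank (U.map f)
  have hmapS : S.map U.subtype = U.map f := by
    have e : S.map U.subtype = LinearMap.range (U.subtype.comp (f.restrict hfU)) := by
      rw [LinearMap.range_comp]
    rw [e, LinearMap.subtype_comp_restrict, LinearMap.range_domRestrict]
  have hdimS : Module.finrank K S = Module.finrank K (U.map f) := by
    rw [← hmapS, Submodule.finrank_map_subtype_eq]
  -- finrank (P.map f) ≤ finrank (ker Φ)
  have hle : P.map f ≤ ((LinearMap.ker Φ).map S.subtype).map U.subtype := by
    rintro y ⟨x, hxP, rfl⟩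
    have hxU : x ∈ U := hPU hxP
    have hfxP : f x ∈ P := hfP x hxP
    have hfxU : f x ∈ U := hPU hfxP
    have hmemS : (⟨f x, hfxU⟩ : U) ∈ S := ⟨⟨x, hxU⟩, rfl⟩
    have hker : (⟨⟨f x, hfxU⟩, hmemS⟩ : S) ∈ LinearMap.ker Φ := by
      rw [hkΦ]
      simpa using hfxP
    exact Submodule.mem_map_of_mem (Submodule.mem_map_of_mem hker)
  have hdimker : Module.finrank K (P.map f) ≤ Module.finrank K (LinearMap.ker Φ) := by
    calc Module.finrank K (P.map f)
        ≤ Module.finrank K (((LinearMap.ker Φ).map S.subtype).map U.subtype) :=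
          Submodule.finrank_mono hle
      _ = Module.finrank K ((LinearMap.ker Φ).map S.subtype) :=
          Submodule.finrank_map_subtype_eq _ _
      _ = Module.finrank K (LinearMap.ker Φ) := Submodule.finrank_map_subtype_eq _ _
  have hrn : Module.finrank K (LinearMap.range Φ) + Module.finrank K (LinearMap.ker Φ)
      = Module.finrank K S := LinearMap.finrank_range_add_finrank_ker Φ
  omega

/-- Inequality (1) of the paper: if `g` is an automorphism of order dividing `p` of a
finite-dimensional vector space `V` over a field of characteristic `p`, and
`0 = W 0 ⊆ W 1 ⊆ ⋯ ⊆ W t = V` is a chain of `g`-invariant subspaces, then the number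
of Jordan blocks of size `p` of `g` (the dimension of the range of `(g - 1)^(p-1)`)
is at least the sum over the successive quotients `F i = W (i+1) ⧸ W i` of the numbers
of Jordan blocks of size `p` of the induced automorphisms. -/
theorem numBlocks_ge_sum_numBlocks_of_filtration
    {K V : Type*} [Field K] [AddCommGroup V] [Module K V] [FiniteDimensional K V]
    (p : ℕ) (hp : 0 < p) [CharP K p]
    (g : Module.End K V) (hg : g ^ p = 1)
    (t : ℕ) (W : Fin (t + 1) → Submodule K V) (hmono : Monotone W)
    (h0 : W 0 = ⊥) (htop : W (Fin.last t) = ⊤)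
    (hinv : ∀ i, ∀ v ∈ W i, g v ∈ W i) :
    Module.finrank K (LinearMap.range ((g - 1) ^ (p - 1)))
      ≥ ∑ i : Fin t,
          Module.finrank K (LinearMap.range
            ((Submodule.mapQ ((W i.castSucc).comap (W i.succ).subtype)
                ((W i.castSucc).comap (W i.succ).subtype)
                (g.restrict (hinv i.succ))
                (by
                  intro x hx
                  simp only [Submodule.mem_comap, LinearMap.restrict_coe_apply] at hx ⊢
                  exact hinv i.castSucc _ hx)
              - 1) ^ (p - 1))) := by
  classical
  have hWg1 : ∀ (j : Fin (t + 1)), ∀ v ∈ W j, (g - 1) v ∈ W j := fun j v hv => by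
    simpa using (W j).sub_mem (hinv j v hv) hv
  have hWf : ∀ (j : Fin (t + 1)), ∀ v ∈ W j, (((g - 1) ^ (p - 1)) : Module.End K V) v ∈ W j :=
    fun j => Module.End.pow_apply_mem_of_forall_mem (p - 1) (hWg1 j)
  have hstep : ∀ i : Fin t,
      Module.finrank K (LinearMap.range
            ((Submodule.mapQ ((W i.castSucc).comap (W i.succ).subtype)
                ((W i.castSucc).comap (W i.succ).subtype)
                (g.restrict (hinv i.succ))
                (by
                  intro x hx
                  simp only [Submodule.mem_comap, LinearMap.restrict_coe_apply] at hx ⊢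
                  exact hinv i.castSucc _ hx)
              - 1) ^ (p - 1)))
        + Module.finrank K ((W i.castSucc).map (((g - 1) ^ (p - 1)) : Module.End K V))
      ≤ Module.finrank K ((W i.succ).map (((g - 1) ^ (p - 1)) : Module.End K V)) := by
    intro i
    have hPU : W i.castSucc ≤ W i.succ := hmono (Fin.castSucc_lt_succ (i := i)).le
    have hfU : ∀ v ∈ W i.succ, (((g - 1) ^ (p - 1)) : Module.End K V) v ∈ W i.succ := hWf i.succ
    have hfP : ∀ v ∈ W i.castSucc, (((g - 1) ^ (p - 1)) : Module.End K V) v ∈ W i.castSucc :=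
      hWf i.castSucc
    have h' : (W i.castSucc).comap (W i.succ).subtype
        ≤ ((W i.castSucc).comap (W i.succ).subtype).comap
            ((((g - 1) ^ (p - 1)) : Module.End K V).restrict hfU) := by
      intro x hx
      simp only [Submodule.mem_comap, LinearMap.restrict_coe_apply] at hx ⊢
      exact hfP _ hx
    have h₁ : (W i.castSucc).comap (W i.succ).subtype
        ≤ ((W i.castSucc).comap (W i.succ).subtype).comap ((g.restrict (hinv i.succ)) - 1) := by
      intro x hx
      simp only [Submodule.mem_comap, Submodule.subtype_apply] at hx ⊢
      have : ((g.restrict (hinv i.succ) - 1) x : V) = g ↑x - ↑x := by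
        simp [LinearMap.sub_apply]
      rw [this]
      exact (W i.castSucc).sub_mem (hinv i.castSucc _ hx) hx
    have e3 : (g.restrict (hinv i.succ)) - 1 = (g - 1).restrict (hWg1 i.succ) := by
      refine LinearMap.ext fun x => Subtype.ext ?_
      simp [LinearMap.sub_apply]
    have e4 : ((g.restrict (hinv i.succ)) - 1) ^ (p - 1)
        = (((g - 1) ^ (p - 1)) : Module.End K V).restrict hfU := by
      rw [e3, Module.End.pow_restrict]
    have key : ((Submodule.mapQ ((W i.castSucc).comap (W i.succ).subtype)
          ((W i.castSucc).comap (W i.succ).subtype)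
          (g.restrict (hinv i.succ))
          (by
            intro x hx
            simp only [Submodule.mem_comap, LinearMap.restrict_coe_apply] at hx ⊢
            exact hinv i.castSucc _ hx)
          - 1) ^ (p - 1))
        = Submodule.mapQ ((W i.castSucc).comap (W i.succ).subtype)
            ((W i.castSucc).comap (W i.succ).subtype)
            ((((g - 1) ^ (p - 1)) : Module.End K V).restrict hfU) h' := by
      have e1 : (Submodule.mapQ ((W i.castSucc).comap (W i.succ).subtype)
          ((W i.castSucc).comap (W i.succ).subtype)
          (g.restrict (hinv i.succ))
          (by
            intro x hx
            simp only [Submodule.mem_comap, LinearMap.restrict_coe_apply] at hx ⊢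
            exact hinv i.castSucc _ hx)
          - 1)
          = Submodule.mapQ ((W i.castSucc).comap (W i.succ).subtype)
              ((W i.castSucc).comap (W i.succ).subtype)
              ((g.restrict (hinv i.succ)) - 1) h₁ := by
        refine Submodule.linearMap_qext _ ?_
        ext x
        simp [Submodule.mapQ_apply, Submodule.Quotient.mk_sub]
      rw [e1, ← Submodule.mapQ_pow _ h₁]
      refine Submodule.linearMap_qext _ ?_
      ext x
      simp [Submodule.mapQ_apply, e4]
    rw [key]
    exact aux_step ((g - 1) ^ (p - 1)) (W i.succ) (W i.castSucc) hPU hfU hfP h'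
  have hmain := aux_sum_chain t _
    (fun j => Module.finrank K ((W j).map (((g - 1) ^ (p - 1)) : Module.End K V))) hstep
  have ha0 : Module.finrank K ((W 0).map (((g - 1) ^ (p - 1)) : Module.End K V)) = 0 := by
    rw [h0, Submodule.map_bot]
    simp
  have halast : Module.finrank K ((W (Fin.last t)).map (((g - 1) ^ (p - 1)) : Module.End K V))
      = Module.finrank K (LinearMap.range (((g - 1) ^ (p - 1)) : Module.End K V)) := by
    rw [htop, Submodule.map_top]
  simp only [ha0, halast, zero_add] at hmain
  exact hmain
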